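/- In the setting of a ℤ/N-graded semisimple based *-algebra A = ⨁ A_a over ℂ, let E and E' be non-isomorphic irreducible A_0-modules that both extend to irreducible A-modules Ẽ and Ẽ'. Then for every a ∈ ℤ/N, the restrictions of the characters to the degree-a component are orthogonal: ⟨χ_{Ẽ}|_{A_a}, χ_{Ẽ'}|_{A_a}⟩ = 0, where ⟨λ₁, λ₂⟩ = Σ_b λ₁(b) · conj(λ₂(b)) over the distinguished basis elements b of A_a. -/

import Mathlib

open Finset
open scoped Matrix


lemma aux_swap4 {α β γ δ M : Type*} [Fintype α] [Fintype β] [Fintype γ] [Fintype δ]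
    [AddCommMonoid M] (F : α → β → γ → δ → M) :
    ∑ i, ∑ p, ∑ n, ∑ m, F i p n m = ∑ n, ∑ m, ∑ i, ∑ p, F i p n m := by
  calc ∑ i, ∑ p, ∑ n, ∑ m, F i p n m
      = ∑ i, ∑ n, ∑ p, ∑ m, F i p n m :=
        Finset.sum_congr rfl fun i _ => Finset.sum_comm
    _ = ∑ n, ∑ i, ∑ p, ∑ m, F i p n m := Finset.sum_comm
    _ = ∑ n, ∑ i, ∑ m, ∑ p, F i p n m :=
        Finset.sum_congr rfl fun n _ => Finset.sum_congr rfl fun i _ => Finset.sum_comm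
    _ = ∑ n, ∑ m, ∑ i, ∑ p, F i p n m :=
        Finset.sum_congr rfl fun n _ => Finset.sum_comm

section Helpers

variable {A : Type*} [Ring A] [Algebra ℂ A]
variable {ι : Type*} [Fintype ι] [DecidableEq ι]
variable (b : Module.Basis ι ℂ A) (τ : A →ₗ[ℂ] ℂ) (s : A → A)

lemma aux_s_zero (hs_add : ∀ x y : A, s (x + y) = s x + s y) : s 0 = 0 := by
  have h : s ((0 : A) + 0) = s 0 + s 0 := hs_add 0 0
  rw [add_zero] at h
  exact (left_eq_add.mp h)

lemma aux_s_sum (hs_add : ∀ x y : A, s (x + y) = s x + s y)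
    {κ : Type*} (t : Finset κ) (g : κ → A) :
    s (∑ k ∈ t, g k) = ∑ k ∈ t, s (g k) := by
  classical
  induction t using Finset.induction_on with
  | empty => simpa using aux_s_zero s hs_add
  | insert k t' hk ih => rw [Finset.sum_insert hk, Finset.sum_insert hk, hs_add, ih]

lemma aux_repr_eq
    (horth : ∀ i j : ι, τ (b i * s (b j)) = if i = j then 1 else 0)
    (x : A) (j : ι) : b.repr x j = τ (x * s (b j)) := by
  conv_rhs => rw [← b.sum_repr x]
  rw [Finset.sum_mul]
  simp_rw [smul_mul_assoc, map_sum, map_smul, horth, smul_eq_mul, mul_ite, mul_one, mul_zero]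
  simp

lemma aux_pairing
    (hs_add : ∀ x y : A, s (x + y) = s x + s y)
    (hs_smul : ∀ (c : ℂ) (x : A), s (c • x) = (starRingEnd ℂ) c • s x)
    (horth : ∀ i j : ι, τ (b i * s (b j)) = if i = j then 1 else 0)
    (x y : A) :
    τ (x * s y) = ∑ j, b.repr x j * (starRingEnd ℂ) (b.repr y j) := by
  conv_lhs => rw [← b.sum_repr y]
  rw [aux_s_sum s hs_add]
  simp_rw [hs_smul, Finset.mul_sum, map_sum, mul_smul_comm, map_smul,
    ← aux_repr_eq b τ s horth, smul_eq_mul]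
  exact Finset.sum_congr rfl fun j _ => mul_comm _ _

lemma aux_herm
    (hs_add : ∀ x y : A, s (x + y) = s x + s y)
    (hs_smul : ∀ (c : ℂ) (x : A), s (c • x) = (starRingEnd ℂ) c • s x)
    (horth : ∀ i j : ι, τ (b i * s (b j)) = if i = j then 1 else 0)
    (x y : A) :
    τ (x * s y) = (starRingEnd ℂ) (τ (y * s x)) := by
  rw [aux_pairing b τ s hs_add hs_smul horth x y,
    aux_pairing b τ s hs_add hs_smul horth y x, map_sum]
  refine Finset.sum_congr rfl fun j _ => ?_
  rw [map_mul, RingHomCompTriple.comp_apply]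
  ring_nf
  simp [mul_comm]

lemma aux_repr_vanish {N : ℕ} (𝒜 : ZMod N → Submodule ℂ A) [GradedAlgebra 𝒜]
    (deg : ι → ZMod N) (hdeg : ∀ i, b i ∈ 𝒜 (deg i))
    {x : A} {c : ZMod N} {j : ι} (hx : x ∈ 𝒜 c) (hj : deg j ≠ c) :
    b.repr x j = 0 := by
  classical
  set D : A →ₗ[ℂ] A := (𝒜 (deg j)).subtype ∘ₗ
    (DirectSum.component ℂ (ZMod N) (fun i => (𝒜 i : Submodule ℂ A)) (deg j)) ∘ₗ
    (DirectSum.decomposeLinearEquiv 𝒜 : A →ₗ[ℂ] _) with hD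
  have hDval : ∀ y : A, D y = ((DirectSum.decompose 𝒜 y (deg j) : 𝒜 (deg j)) : A) := by
    intro y; rfl
  have key : ∀ y : A, b.repr y j = b.repr (D y) j := by
    have h := Module.Basis.ext (b := b)
      (f₁ := (Finsupp.lapply j) ∘ₗ (b.repr : A →ₗ[ℂ] (ι →₀ ℂ)))
      (f₂ := (Finsupp.lapply j) ∘ₗ (b.repr : A →ₗ[ℂ] (ι →₀ ℂ)) ∘ₗ D)
      (fun i => by
        by_cases hij : deg i = deg j
        · have : b i ∈ 𝒜 (deg j) := hij ▸ hdeg i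
          simp [hDval, DirectSum.decompose_of_mem_same 𝒜 this]
        · have hne : i ≠ j := fun h => hij (by rw [h])
          simp [hDval, DirectSum.decompose_of_mem_ne 𝒜 (hdeg i) hij,
            Module.Basis.repr_self, Finsupp.single_apply, hne])
    intro y
    exact DFunLike.congr_fun h y
  rw [key x, hDval, DirectSum.decompose_of_mem_ne 𝒜 hx (Ne.symm hj)]
  simp

end Helpers

theorem stmt10 {A : Type*} [Ring A] [Algebra ℂ A] [FiniteDimensional ℂ A] [IsSemisimpleRing A]
    {N : ℕ} (𝒜 : ZMod N → Submodule ℂ A) [GradedAlgebra 𝒜]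
    {ι : Type*} [Fintype ι] [DecidableEq ι]
    (b : Module.Basis ι ℂ A) (deg : ι → ZMod N) (hdeg : ∀ i, b i ∈ 𝒜 (deg i))
    (τ : A →ₗ[ℂ] ℂ) (s : A → A)
    (hs_add : ∀ x y : A, s (x + y) = s x + s y)
    (hs_smul : ∀ (c : ℂ) (x : A), s (c • x) = (starRingEnd ℂ) c • s x)
    (hs_mul : ∀ x y : A, s (x * y) = s y * s x)
    (hs_invol : ∀ x : A, s (s x) = x)
    (hs_basis : ∀ i : ι, ∃ j : ι, s (b i) = b j)
    (hsym : ∀ x y : A, τ (x * y) = τ (y * x))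
    (horth : ∀ i j : ι, τ (b i * s (b j)) = if i = j then 1 else 0)
    {E E' : Type*} [AddCommGroup E] [Module ℂ E] [FiniteDimensional ℂ E] [Nontrivial E]
    [AddCommGroup E'] [Module ℂ E'] [FiniteDimensional ℂ E'] [Nontrivial E']
    (Θ : A →ₐ[ℂ] Module.End ℂ E) (Θ' : A →ₐ[ℂ] Module.End ℂ E')
    (hirr0 : ∀ W : Submodule ℂ E, (∀ c ∈ 𝒜 0, ∀ w ∈ W, Θ c w ∈ W) → W = ⊥ ∨ W = ⊤)
    (hirr0' : ∀ W : Submodule ℂ E', (∀ c ∈ 𝒜 0, ∀ w ∈ W, Θ' c w ∈ W) → W = ⊥ ∨ W = ⊤)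
    (hnoniso : ¬ ∃ T : E ≃ₗ[ℂ] E', ∀ c ∈ 𝒜 0, ∀ v : E, T (Θ c v) = Θ' c (T v)) :
    ∀ a : ZMod N,
      ∑ i ∈ Finset.univ.filter (fun i => deg i = a),
          LinearMap.trace ℂ E (Θ (b i)) * (starRingEnd ℂ) (LinearMap.trace ℂ E' (Θ' (b i)))
        = 0 := by
  classical
  intro a
  choose σ hσ using hs_basis
  have hsinv : ∀ i, s (b (σ i)) = b i := fun i => by rw [← hσ i, hs_invol]
  have hσσ : ∀ i, σ (σ i) = i := fun i => b.injective (by rw [← hσ (σ i), hsinv])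
  have hσbij : Function.Bijective σ := Function.Involutive.bijective hσσ
  set Fa : Finset ι := Finset.univ.filter (fun i => deg i = a) with hFa
  have hrepr := aux_repr_eq b τ s horth
  have hvan : ∀ {x : A} {c : ZMod N} {j : ι}, x ∈ 𝒜 c → deg j ≠ c → b.repr x j = 0 :=
    fun hx hj => aux_repr_vanish b 𝒜 deg hdeg hx hj
  have hherm := aux_herm b τ s hs_add hs_smul horth
  have hexpand : ∀ (x : A) (u : E), Θ x u = ∑ j, b.repr x j • Θ (b j) u := by
    intro x u
    conv_lhs => rw [← b.sum_repr x]
    simp [-Module.Basis.sum_repr]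
  have hexpand' : ∀ (x : A) (u : E'), Θ' x u = ∑ j, b.repr x j • Θ' (b j) u := by
    intro x u
    conv_lhs => rw [← b.sum_repr x]
    simp [-Module.Basis.sum_repr]
  -- the key coefficient identity
  have hcoef : ∀ (c : A) (i j : ι),
      b.repr (s (b i) * c) (σ j) = b.repr (c * b j) i := by
    intro c i j
    rw [hrepr, hrepr, hsinv, mul_assoc, hsym]
  -- Step B + C : the averaged operator vanishes for every f
  have hzero : ∀ f : E' →ₗ[ℂ] E,
      (∑ i ∈ Fa, (Θ (b i) : E →ₗ[ℂ] E) ∘ₗ f ∘ₗ (Θ' (s (b i)) : E' →ₗ[ℂ] E')) = 0 := by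
    intro f
    set T : E' →ₗ[ℂ] E :=
      ∑ i ∈ Fa, (Θ (b i) : E →ₗ[ℂ] E) ∘ₗ f ∘ₗ (Θ' (s (b i)) : E' →ₗ[ℂ] E') with hT
    have hTapp : ∀ u : E', T u = ∑ i ∈ Fa, Θ (b i) (f (Θ' (s (b i)) u)) := by
      intro u; simp [hT]
    have hint : ∀ c ∈ 𝒜 0, ∀ u : E', Θ c (T u) = T (Θ' c u) := by
      intro c hc u
      rw [hTapp, hTapp, map_sum]
      have step1 : ∀ i : ι, Θ c (Θ (b i) (f (Θ' (s (b i)) u)))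
          = ∑ j, b.repr (c * b i) j • Θ (b j) (f (Θ' (s (b i)) u)) := by
        intro i
        rw [← hexpand (c * b i), map_mul]
        rfl
      have step2 : ∀ i : ι, Θ (b i) (f (Θ' (s (b i)) (Θ' c u)))
          = ∑ j, b.repr (c * b j) i • Θ (b i) (f (Θ' (s (b j)) u)) := by
        intro i
        have h1 : Θ' (s (b i)) (Θ' c u) = Θ' (s (b i) * c) u := by
          rw [map_mul]; rfl
        rw [h1, hexpand' (s (b i) * c) u, map_sum, map_sum]
        rw [← Function.Bijective.sum_comp hσbij
          (fun k => Θ (b i) (f (b.repr (s (b i) * c) k • Θ' (b k) u)))]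
        refine Finset.sum_congr rfl fun j _ => ?_
        rw [hcoef c i j, ← hσ j, map_smul, map_smul]
      simp_rw [step1, step2]
      -- restrict both double sums to Fa × Fa and compare
      have hL : ∀ i ∈ Fa, (∑ j, b.repr (c * b i) j • Θ (b j) (f (Θ' (s (b i)) u)))
          = ∑ j ∈ Fa, b.repr (c * b i) j • Θ (b j) (f (Θ' (s (b i)) u)) := by
        intro i hi
        refine (Finset.sum_subset (Finset.subset_univ Fa) ?_).symm
        intro j _ hj
        have hdegi : deg i = a := (Finset.mem_filter.mp hi).2
        have hdegj : deg j ≠ a := fun h => hj (Finset.mem_filter.mpr ⟨Finset.mem_univ j, h⟩)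
        have hmem : c * b i ∈ 𝒜 a := by
          have := SetLike.mul_mem_graded hc (hdeg i)
          rwa [zero_add, hdegi] at this
        rw [hvan hmem hdegj, zero_smul]
      have hR : ∀ i ∈ Fa, (∑ j, b.repr (c * b j) i • Θ (b i) (f (Θ' (s (b j)) u)))
          = ∑ j ∈ Fa, b.repr (c * b j) i • Θ (b i) (f (Θ' (s (b j)) u)) := by
        intro i hi
        refine (Finset.sum_subset (Finset.subset_univ Fa) ?_).symm
        intro j _ hj
        have hdegi : deg i = a := (Finset.mem_filter.mp hi).2
        have hdegj : deg j ≠ a := fun h => hj (Finset.mem_filter.mpr ⟨Finset.mem_univ j, h⟩)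
        have hmem : c * b j ∈ 𝒜 (deg j) := by
          have := SetLike.mul_mem_graded hc (hdeg j)
          rwa [zero_add] at this
        have hne : deg i ≠ deg j := by rw [hdegi]; exact fun h => hdegj h.symm
        rw [hvan hmem hne, zero_smul]
      rw [Finset.sum_congr rfl hL, Finset.sum_congr rfl hR]
      exact Finset.sum_comm
    -- Schur's lemma
    by_contra hTne
    have hker : LinearMap.ker T = ⊥ := by
      rcases hirr0' (LinearMap.ker T) (fun c hc u hu => by
        rw [LinearMap.mem_ker, ← hint c hc u, LinearMap.mem_ker.mp hu, map_zero]) with h | h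
      · exact h
      · exact absurd (LinearMap.ker_eq_top.mp h) hTne
    have hrange : LinearMap.range T = ⊤ := by
      rcases hirr0 (LinearMap.range T) (fun c hc v hv => by
        obtain ⟨u, rfl⟩ := hv
        exact ⟨Θ' c u, (hint c hc u).symm⟩) with h | h
      · exact absurd (LinearMap.range_eq_bot.mp h) hTne
      · exact h
    have hbij : Function.Bijective T :=
      ⟨LinearMap.ker_eq_bot.mp hker, LinearMap.range_eq_top.mp hrange⟩
    set e : E' ≃ₗ[ℂ] E := LinearEquiv.ofBijective T hbij with he
    have hecoe : ∀ u : E', e u = T u := fun u => rfl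
    refine hnoniso ⟨e.symm, fun c hc v => ?_⟩
    apply e.injective
    rw [e.apply_symm_apply]
    rw [hecoe, ← hint c hc, ← hecoe, e.apply_symm_apply]
  -- Step D : trace pairing from hzero
  set v : Module.Basis (Fin (Module.finrank ℂ E)) ℂ E := Module.finBasis ℂ E with hv
  set w : Module.Basis (Fin (Module.finrank ℂ E')) ℂ E' := Module.finBasis ℂ E' with hw
  have tfor : ∀ g : Module.End ℂ E, LinearMap.trace ℂ E g = ∑ m, v.repr (g (v m)) m := by
    intro g
    rw [LinearMap.trace_eq_matrix_trace ℂ v g]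
    simp [Matrix.trace, Matrix.diag, LinearMap.toMatrix_apply]
  have tfor' : ∀ g : Module.End ℂ E', LinearMap.trace ℂ E' g = ∑ n, w.repr (g (w n)) n := by
    intro g
    rw [LinearMap.trace_eq_matrix_trace ℂ w g]
    simp [Matrix.trace, Matrix.diag, LinearMap.toMatrix_apply]
  have keyD : ∀ (n : Fin (Module.finrank ℂ E')) (m : Fin (Module.finrank ℂ E)),
      ∑ i ∈ Fa, w.repr (Θ' (s (b i)) (w n)) n * v.repr (Θ (b i) (v m)) m = 0 := by
    intro n m
    have h := hzero ((w.coord n).smulRight (v m))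
    have h2 := congrArg (fun (g : E' →ₗ[ℂ] E) => v.repr (g (w n)) m) h
    simpa [LinearMap.sum_apply, LinearMap.smulRight_apply, Module.Basis.coord_apply, map_smul,
      Finsupp.smul_apply, smul_eq_mul, map_sum, Finset.sum_apply'] using h2
  have hD : ∑ i ∈ Fa, LinearMap.trace ℂ E (Θ (b i)) * LinearMap.trace ℂ E' (Θ' (s (b i))) = 0 := by
    calc ∑ i ∈ Fa, LinearMap.trace ℂ E (Θ (b i)) * LinearMap.trace ℂ E' (Θ' (s (b i)))
        = ∑ i ∈ Fa, ∑ m, ∑ n, v.repr (Θ (b i) (v m)) m * w.repr (Θ' (s (b i)) (w n)) n := by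
          refine Finset.sum_congr rfl fun i _ => ?_
          rw [tfor, tfor', Finset.sum_mul_sum]
      _ = 0 := by
          rw [Finset.sum_comm]
          refine Finset.sum_eq_zero fun m _ => ?_
          rw [Finset.sum_comm]
          refine Finset.sum_eq_zero fun n _ => ?_
          simpa [mul_comm] using keyD n m
  -- Step E : χ'(s x) = conj (χ'(x))
  set Ml : A →ₗ[ℂ] Matrix (Fin (Module.finrank ℂ E')) (Fin (Module.finrank ℂ E')) ℂ :=
    (LinearMap.toMatrix w w).toLinearMap ∘ₗ Θ'.toLinearMap with hMl
  have hMldef : ∀ x : A, Ml x = LinearMap.toMatrix w w (Θ' x) := fun x => rfl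
  have hMlmul : ∀ x y : A, Ml (x * y) = Ml x * Ml y := by
    intro x y
    rw [hMldef, hMldef, hMldef, map_mul, LinearMap.toMatrix_mul]
  have hMlexp : ∀ x : A, Ml x = ∑ j, b.repr x j • Ml (b j) := by
    intro x
    conv_lhs => rw [← b.sum_repr x]
    rw [map_sum]
    simp_rw [map_smul]
  set G : Matrix (Fin (Module.finrank ℂ E')) (Fin (Module.finrank ℂ E')) ℂ :=
    ∑ i, (Ml (b i))ᵀ * (Ml (b i)).map (starRingEnd ℂ) with hG
  have mapconj_sum : ∀ {κ : Type _} [Fintype κ] (g : κ → Matrix (Fin (Module.finrank ℂ E'))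
      (Fin (Module.finrank ℂ E')) ℂ),
      (∑ k, g k).map (starRingEnd ℂ) = ∑ k, (g k).map (starRingEnd ℂ) := by
    intro κ _ g
    ext n m
    simp [Matrix.map_apply, Matrix.sum_apply]
  have mapconj_smul : ∀ (c : ℂ) (M : Matrix (Fin (Module.finrank ℂ E'))
      (Fin (Module.finrank ℂ E')) ℂ),
      (c • M).map (starRingEnd ℂ) = (starRingEnd ℂ) c • M.map (starRingEnd ℂ) := by
    intro c M
    ext n m
    simp [Matrix.map_apply]
  have hcoefE : ∀ (x : A) (i j : ι),
      b.repr (b j * s x) i = (starRingEnd ℂ) (b.repr (b i * x) j) := by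
    intro x i j
    rw [hrepr, hrepr, ← hherm]
    congr 1
    rw [hs_mul, mul_assoc]
  have hGinvar : ∀ x : A, (Ml x)ᵀ * G = G * ((Ml (s x)).map (starRingEnd ℂ)) := by
    intro x
    have lhs_eq : (Ml x)ᵀ * G = ∑ i, ∑ j, b.repr (b i * x) j •
        ((Ml (b j))ᵀ * (Ml (b i)).map (starRingEnd ℂ)) := by
      rw [hG, Finset.mul_sum]
      refine Finset.sum_congr rfl fun i _ => ?_
      rw [← Matrix.mul_assoc, ← Matrix.transpose_mul, ← hMlmul]
      conv_lhs => rw [hMlexp (b i * x)]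
      rw [Matrix.transpose_sum, Finset.sum_mul]
      refine Finset.sum_congr rfl fun j _ => ?_
      rw [Matrix.transpose_smul, Matrix.smul_mul]
    have rhs_eq : G * ((Ml (s x)).map (starRingEnd ℂ)) = ∑ i, ∑ j, b.repr (b j * x) i •
        ((Ml (b i))ᵀ * (Ml (b j)).map (starRingEnd ℂ)) := by
      rw [hG, Finset.sum_mul]
      refine Finset.sum_congr rfl fun i _ => ?_
      rw [Matrix.mul_assoc, ← Matrix.map_mul, ← hMlmul]
      conv_lhs => rw [hMlexp (b i * s x)]
      rw [mapconj_sum, Finset.mul_sum]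
      refine Finset.sum_congr rfl fun j _ => ?_
      rw [mapconj_smul, Matrix.mul_smul]
      congr 1
      rw [hcoefE x j i, Complex.conj_conj]
    rw [lhs_eq, rhs_eq]
    exact Finset.sum_comm
  -- G is invertible
  have hGentry : ∀ n m', G n m' = ∑ i, ∑ p, (Ml (b i)) p n * (starRingEnd ℂ) ((Ml (b i)) p m') := by
    intro n m'
    rw [hG, Matrix.sum_apply]
    refine Finset.sum_congr rfl fun i _ => ?_
    rw [Matrix.mul_apply]
    refine Finset.sum_congr rfl fun p _ => ?_
    rw [Matrix.transpose_apply, Matrix.map_apply]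
  have hGdet : IsUnit G.det := by
    rw [isUnit_iff_ne_zero]
    intro hdet0
    obtain ⟨z, hz0, hGz⟩ := Matrix.exists_mulVec_eq_zero_iff.mpr hdet0
    have hmv : ∀ (Q : Matrix (Fin (Module.finrank ℂ E')) (Fin (Module.finrank ℂ E')) ℂ)
        (u : Fin (Module.finrank ℂ E') → ℂ) (p : Fin (Module.finrank ℂ E')),
        Q.mulVec u p = ∑ n, Q p n * u n := fun Q u p => rfl
    have hconjmv : ∀ (i : ι) (p : Fin (Module.finrank ℂ E')),
        (starRingEnd ℂ) ((Ml (b i)).mulVec (star z) p)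
          = ∑ m, (starRingEnd ℂ) ((Ml (b i)) p m) * z m := by
      intro i p
      rw [hmv, map_sum]
      refine Finset.sum_congr rfl fun m _ => ?_
      rw [map_mul]
      congr 1
      simp
    have hquadr : ∑ i, ∑ p, (Ml (b i)).mulVec (star z) p
          * (starRingEnd ℂ) ((Ml (b i)).mulVec (star z) p)
        = ∑ n, (starRingEnd ℂ) (z n) * (G.mulVec z) n := by
      calc ∑ i, ∑ p, (Ml (b i)).mulVec (star z) p
              * (starRingEnd ℂ) ((Ml (b i)).mulVec (star z) p)
          = ∑ i, ∑ p, ∑ n, ∑ m, ((starRingEnd ℂ) (z n)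
              * (((Ml (b i)) p n * (starRingEnd ℂ) ((Ml (b i)) p m)) * z m)) := by
            refine Finset.sum_congr rfl fun i _ => Finset.sum_congr rfl fun p _ => ?_
            rw [hconjmv, hmv, Finset.sum_mul_sum]
            refine Finset.sum_congr rfl fun n _ => Finset.sum_congr rfl fun m _ => ?_
            have hstar : star z n = (starRingEnd ℂ) (z n) := rfl
            rw [hstar]
            ring
        _ = ∑ n, ∑ m, ∑ i, ∑ p, ((starRingEnd ℂ) (z n)
              * (((Ml (b i)) p n * (starRingEnd ℂ) ((Ml (b i)) p m)) * z m)) := aux_swap4 _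
        _ = ∑ n, (starRingEnd ℂ) (z n) * (G.mulVec z) n := by
            refine Finset.sum_congr rfl fun n _ => ?_
            rw [hmv, Finset.mul_sum]
            refine Finset.sum_congr rfl fun m _ => ?_
            rw [hGentry n m, Finset.sum_mul, Finset.mul_sum]
            simp only [Finset.sum_mul, Finset.mul_sum]
    have hzero2 : ∑ i, ∑ p, (Ml (b i)).mulVec (star z) p
        * (starRingEnd ℂ) ((Ml (b i)).mulVec (star z) p) = 0 := by
      rw [hquadr, hGz]
      simp
    have hy : ∀ (i : ι) (p : Fin (Module.finrank ℂ E')), (Ml (b i)).mulVec (star z) p = 0 := by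
      have hreal : ∑ i, ∑ p, (Complex.normSq ((Ml (b i)).mulVec (star z) p) : ℝ) = 0 := by
        have : ((∑ i, ∑ p, (Complex.normSq ((Ml (b i)).mulVec (star z) p) : ℝ) : ℝ) : ℂ) = 0 := by
          push_cast
          rw [← hzero2]
          refine Finset.sum_congr rfl fun i _ => Finset.sum_congr rfl fun p _ => ?_
          rw [Complex.mul_conj]
        exact_mod_cast this
      intro i p
      have h1 : ∀ i ∈ (Finset.univ : Finset ι),
          (∑ p, (Complex.normSq ((Ml (b i)).mulVec (star z) p) : ℝ)) = 0 := by
        rw [← Finset.sum_eq_zero_iff_of_nonneg]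
        · exact hreal
        · intro i _
          exact Finset.sum_nonneg fun p _ => Complex.normSq_nonneg _
      have h2 := (Finset.sum_eq_zero_iff_of_nonneg
        (fun p _ => Complex.normSq_nonneg ((Ml (b i)).mulVec (star z) p))).mp
        (h1 i (Finset.mem_univ i)) p (Finset.mem_univ p)
      exact Complex.normSq_eq_zero.mp h2
    have hone : ∀ p, (Ml (1 : A)).mulVec (star z) p = 0 := by
      intro p
      rw [hMlexp 1]
      have hexp : ((∑ j, b.repr (1 : A) j • Ml (b j)).mulVec (star z)) p
          = ∑ j, b.repr (1 : A) j * ((Ml (b j)).mulVec (star z) p) := by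
        rw [hmv]
        calc ∑ n, (∑ j, b.repr (1 : A) j • Ml (b j)) p n * star z n
            = ∑ n, ∑ j, b.repr (1 : A) j * ((Ml (b j)) p n * star z n) := by
              refine Finset.sum_congr rfl fun n _ => ?_
              rw [Matrix.sum_apply, Finset.sum_mul]
              refine Finset.sum_congr rfl fun j _ => ?_
              rw [Matrix.smul_apply, smul_eq_mul]
              ring
          _ = ∑ j, ∑ n, b.repr (1 : A) j * ((Ml (b j)) p n * star z n) := Finset.sum_comm
          _ = ∑ j, b.repr (1 : A) j * ((Ml (b j)).mulVec (star z) p) := by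
              refine Finset.sum_congr rfl fun j _ => ?_
              rw [hmv, Finset.mul_sum]
      rw [hexp]
      refine Finset.sum_eq_zero fun j _ => ?_
      rw [hy j p, mul_zero]
    have hMl1 : Ml (1 : A) = 1 := by
      rw [hMldef, map_one]
      exact LinearMap.toMatrix_one w
    rw [hMl1] at hone
    have hz : star z = 0 := by
      funext p
      rw [← Matrix.one_mulVec (star z)]
      exact hone p
    apply hz0
    funext n
    have := congrFun hz n
    simpa using congrArg (starRingEnd ℂ) this
  -- trace identity
  have htraceE : ∀ x : A, ((Ml (s x)).map (starRingEnd ℂ)).trace = (Ml x).trace := by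
    intro x
    have hC : (Ml (s x)).map (starRingEnd ℂ) = G⁻¹ * ((Ml x)ᵀ * G) := by
      calc (Ml (s x)).map (starRingEnd ℂ)
          = (G⁻¹ * G) * ((Ml (s x)).map (starRingEnd ℂ)) := by
            rw [Matrix.nonsing_inv_mul G hGdet, Matrix.one_mul]
        _ = G⁻¹ * (G * ((Ml (s x)).map (starRingEnd ℂ))) := mul_assoc _ _ _
        _ = G⁻¹ * ((Ml x)ᵀ * G) := by rw [← hGinvar x]
    rw [hC, ← mul_assoc, Matrix.trace_mul_cycle,
      Matrix.mul_nonsing_inv G hGdet, Matrix.one_mul, Matrix.trace_transpose]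
  have hconjtrace : ∀ x : A, ((Ml (s x)).map (starRingEnd ℂ)).trace
      = (starRingEnd ℂ) ((Ml (s x)).trace) := by
    intro x
    simp [Matrix.trace, Matrix.diag, Matrix.map_apply]
  have hE : ∀ x : A, LinearMap.trace ℂ E' (Θ' (s x))
      = (starRingEnd ℂ) (LinearMap.trace ℂ E' (Θ' x)) := by
    intro x
    have h1 : LinearMap.trace ℂ E' (Θ' x) = (Ml x).trace := by
      rw [hMldef x]
      exact LinearMap.trace_eq_matrix_trace ℂ w (Θ' x)
    have h2 : LinearMap.trace ℂ E' (Θ' (s x)) = (Ml (s x)).trace := by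
      rw [hMldef (s x)]
      exact LinearMap.trace_eq_matrix_trace ℂ w (Θ' (s x))
    rw [h1, h2]
    have h3 : (starRingEnd ℂ) ((Ml (s x)).trace) = (Ml x).trace := by
      rw [← hconjtrace, htraceE]
    calc (Ml (s x)).trace = (starRingEnd ℂ) ((starRingEnd ℂ) ((Ml (s x)).trace)) :=
          (Complex.conj_conj _).symm
      _ = (starRingEnd ℂ) ((Ml x).trace) := by rw [h3]
  -- final assembly
  calc ∑ i ∈ Fa, LinearMap.trace ℂ E (Θ (b i))
          * (starRingEnd ℂ) (LinearMap.trace ℂ E' (Θ' (b i)))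
      = ∑ i ∈ Fa, LinearMap.trace ℂ E (Θ (b i)) * LinearMap.trace ℂ E' (Θ' (s (b i))) := by
        refine Finset.sum_congr rfl fun i _ => ?_
        rw [hE (b i)]
    _ = 0 := hD
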